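/- If 1/2 < ℓ < 1, then there exists a constant C such that for all c > 0 and all real a, ∫_{|x| ≤ c} dx / ((1+|x|)^{2(1-ℓ)} |a-x|^{1/2}) ≤ C (1+c)^{2(ℓ-1/2)} / (1+|a|)^{1/2}. -/

import Mathlib

open MeasureTheory

lemma abs_rpow_intInt {s : ℝ} (hs : -1 < s) (a b : ℝ) :
    IntervalIntegrable (fun x => |x| ^ s) volume a b := by
  have key : ∀ c : ℝ, 0 ≤ c → IntervalIntegrable (fun x : ℝ => |x| ^ s) volume 0 c := by
    intro c hc
    rw [intervalIntegrable_iff, Set.uIoc_of_le hc]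
    have h0 : IntegrableOn (fun x : ℝ => x ^ s) (Set.Ioc 0 c) := by
      have := intervalIntegral.intervalIntegrable_rpow' (a := 0) (b := c) hs
      rwa [intervalIntegrable_iff, Set.uIoc_of_le hc] at this
    exact h0.congr_fun (fun x hx => by rw [abs_of_pos hx.1]) measurableSet_Ioc
  have key' : ∀ c : ℝ, IntervalIntegrable (fun x : ℝ => |x| ^ s) volume 0 c := by
    intro c
    rcases le_total 0 c with h | h
    · exact key c h
    · exact (IntervalIntegrable.iff_comp_neg (a := 0) (b := c) (f := fun x : ℝ => |x| ^ s)).mpr (by simpa [abs_neg] using key (-c) (by linarith))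
  exact (key' a).symm.trans (key' b)

lemma abs_rpow_integral {s : ℝ} (hs : -1 < s) (hs0 : s < 0) {r : ℝ} (hr : 0 ≤ r) :
    ∫ x in Set.Icc (-r) r, |x| ^ s = 2 * r ^ (s + 1) / (s + 1) := by
  rw [MeasureTheory.integral_Icc_eq_integral_Ioc,
    ← intervalIntegral.integral_of_le (by linarith : -r ≤ r)]
  have h1 : ∫ x in (0:ℝ)..r, |x| ^ s = r ^ (s + 1) / (s + 1) := by
    rw [intervalIntegral.integral_congr (g := fun x : ℝ => x ^ s) ?_,
      integral_rpow (Or.inl hs)]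
    · rw [Real.zero_rpow (by linarith : s + 1 ≠ 0)]; ring
    · intro x hx
      rw [Set.uIcc_of_le hr] at hx
      simp [abs_of_nonneg hx.1]
  have h2 : ∫ x in (-r)..(0:ℝ), |x| ^ s = ∫ x in (0:ℝ)..r, |x| ^ s := by
    have := intervalIntegral.integral_comp_neg (a := 0) (b := r) (fun x : ℝ => |x| ^ s)
    simpa [abs_neg] using this.symm
  rw [← intervalIntegral.integral_add_adjacent_intervals (abs_rpow_intInt hs (-r) 0)
    (abs_rpow_intInt hs 0 r), h2, h1]
  ring

lemma opa_intInt (p a b : ℝ) : IntervalIntegrable (fun x : ℝ => (1 + |x|) ^ p) volume a b :=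
  ((continuous_const.add continuous_abs).rpow_const
    (fun x => Or.inl (by show (1:ℝ) + |x| ≠ 0; positivity))).intervalIntegrable a b

lemma opa_integral {p : ℝ} (hp : -1 < p) {c : ℝ} (hc : 0 ≤ c) :
    ∫ x in Set.Icc (-c) c, (1 + |x|) ^ p = 2 * ((1 + c) ^ (p + 1) - 1) / (p + 1) := by
  rw [MeasureTheory.integral_Icc_eq_integral_Ioc,
    ← intervalIntegral.integral_of_le (by linarith : -c ≤ c)]
  have h1 : ∫ x in (0:ℝ)..c, (1 + |x|) ^ p = ((1 + c) ^ (p + 1) - 1) / (p + 1) := by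
    rw [intervalIntegral.integral_congr (g := fun x : ℝ => (1 + x) ^ p) ?_]
    · have := intervalIntegral.integral_comp_add_left (a := 0) (b := c)
        (fun x : ℝ => x ^ p) 1
      rw [this, integral_rpow (Or.inl hp)]
      norm_num
    · intro x hx
      rw [Set.uIcc_of_le hc] at hx
      simp [abs_of_nonneg hx.1]
  have h2 : ∫ x in (-c)..(0:ℝ), (1 + |x|) ^ p = ∫ x in (0:ℝ)..c, (1 + |x|) ^ p := by
    have := intervalIntegral.integral_comp_neg (a := 0) (b := c) (fun x : ℝ => (1 + |x|) ^ p)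
    simpa [abs_neg] using this.symm
  rw [← intervalIntegral.integral_add_adjacent_intervals (opa_intInt p (-c) 0)
    (opa_intInt p 0 c), h2, h1]
  ring

lemma sub_abs_rpow_intOn {s : ℝ} (hs : -1 < s) (a u v : ℝ) (huv : u ≤ v) :
    IntegrableOn (fun x : ℝ => |a - x| ^ s) (Set.Icc u v) := by
  have h := (abs_rpow_intInt hs (a - u) (a - v)).comp_sub_left a
  have h2 : IntervalIntegrable (fun x : ℝ => |a - x| ^ s) volume u v := by
    simpa [sub_sub_cancel] using h
  rw [intervalIntegrable_iff_integrableOn_Ioc_of_le huv] at h2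
  rwa [integrableOn_Icc_iff_integrableOn_Ioc]

lemma sub_abs_rpow_integral {s : ℝ} (hs : -1 < s) (hs0 : s < 0) {r : ℝ} (hr : 0 ≤ r) (a : ℝ) :
    ∫ x in Set.Icc (a - r) (a + r), |a - x| ^ s = 2 * r ^ (s + 1) / (s + 1) := by
  rw [MeasureTheory.integral_Icc_eq_integral_Ioc,
    ← intervalIntegral.integral_of_le (by linarith : a - r ≤ a + r)]
  have := intervalIntegral.integral_comp_sub_left (a := a - r) (b := a + r)
    (fun x : ℝ => |x| ^ s) a
  rw [this]
  have e1 : a - (a + r) = -r := by ring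
  have e2 : a - (a - r) = r := by ring
  rw [e1, e2, intervalIntegral.integral_of_le (by linarith : -r ≤ r),
    ← MeasureTheory.integral_Icc_eq_integral_Ioc]
  exact abs_rpow_integral hs hs0 hr

theorem calc_est_4 (l : ℝ) (hl1 : 1/2 < l) (hl2 : l < 1) :
    ∃ C : ℝ, ∀ c : ℝ, 0 < c → ∀ a : ℝ,
      (∫ x in Set.Icc (-c) c, 1 / ((1 + |x|) ^ (2*(1 - l)) * |a - x| ^ ((1:ℝ)/2))) ≤
        C * (1 + c) ^ (2*(l - 1/2)) / (1 + |a|) ^ ((1:ℝ)/2) := by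
  have hq : (0:ℝ) < 2 * l - 1 := by linarith
  refine ⟨4 / (2 * l - 1) + 8, fun c hc a => ?_⟩
  have hA : (0:ℝ) < 1 + |a| := by positivity
  set q : ℝ := 2 * l - 1 with hqdef
  set p : ℝ := 2 * l - 2 with hpdef
  set A : ℝ := 1 + |a| with hAdef
  set r : ℝ := A / 2 with hrdef
  have hp1 : (-1:ℝ) < p := by rw [hpdef]; linarith
  have hp0 : p < 0 := by rw [hpdef]; linarith
  have hr : 0 < r := by rw [hrdef]; linarith
  have hm1 : (-1:ℝ) < -((1:ℝ)/2) := by norm_num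
  have hm0 : -((1:ℝ)/2) < 0 := by norm_num
  have hfeq : ∀ x : ℝ, 1 / ((1 + |x|) ^ (2*(1 - l)) * |a - x| ^ ((1:ℝ)/2)) =
      (1 + |x|) ^ p * |a - x| ^ (-((1:ℝ)/2)) := by
    intro x
    rw [one_div, mul_inv, ← Real.rpow_neg (by positivity), ← Real.rpow_neg (abs_nonneg _)]
    congr 2
    rw [hpdef]; ring
  simp only [hfeq]
  have hqexp : 2 * (l - 1/2) = q := by rw [hqdef]; ring
  rw [hqexp]
  have hApos : (0:ℝ) < A ^ ((1:ℝ)/2) := Real.rpow_pos_of_pos hA _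
  have hcq : (0:ℝ) < (1 + c) ^ q := Real.rpow_pos_of_pos (by linarith) _
  have hfnn : 0 ≤ᵐ[volume.restrict (Set.Icc (-c) c)]
      fun x : ℝ => (1 + |x|) ^ p * |a - x| ^ (-((1:ℝ)/2)) :=
    Filter.Eventually.of_forall fun x =>
      mul_nonneg (Real.rpow_nonneg (by positivity) _) (Real.rpow_nonneg (abs_nonneg _) _)
  have hbase : ∫ x in Set.Icc (-c) c, (1 + |x|) ^ p ≤ 2 / q * (1 + c) ^ q := by
    rw [opa_integral hp1 hc.le, show p + 1 = q by rw [hpdef, hqdef]; ring]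
    calc 2 * ((1 + c) ^ q - 1) / q ≤ 2 * (1 + c) ^ q / q := by gcongr; linarith
      _ = 2 / q * (1 + c) ^ q := by ring
  have h4half : ((4:ℝ)) ^ ((1:ℝ)/2) = 2 := by
    rw [show (4:ℝ) = 2 ^ (2:ℕ) by norm_num, ← Real.rpow_natCast 2 2,
      ← Real.rpow_mul (by norm_num : (0:ℝ) ≤ 2)]
    norm_num
  have hfact1 : r ^ (-((1:ℝ)/2)) ≤ 2 / A ^ ((1:ℝ)/2) := by
    have he : 2 / A ^ ((1:ℝ)/2) = (A/4) ^ (-((1:ℝ)/2)) := by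
      rw [Real.rpow_neg (by linarith : (0:ℝ) ≤ A/4), Real.div_rpow hA.le (by norm_num), h4half,
        inv_div]
    rw [he]
    exact Real.rpow_le_rpow_of_nonpos (by linarith) (by rw [hrdef]; linarith) (by norm_num)
  have hbasenn : 0 ≤ ∫ x in Set.Icc (-c) c, (1 + |x|) ^ p :=
    setIntegral_nonneg measurableSet_Icc fun x _ => Real.rpow_nonneg (by positivity) _
  by_cases hca : |a| ≤ 2 * c + 1
  · -- near case
    set K1 : ℝ := r ^ (-((1:ℝ)/2)) with hK1def
    set K2 : ℝ := r ^ p with hK2def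
    have hK1 : 0 ≤ K1 := Real.rpow_nonneg hr.le _
    have hK2 : 0 ≤ K2 := Real.rpow_nonneg hr.le _
    set S : Set ℝ := Set.Icc (a - r) (a + r) with hSdef
    have hint1 : IntegrableOn (fun x : ℝ => K1 * (1 + |x|) ^ p) (Set.Icc (-c) c) :=
      (((continuous_const.add continuous_abs).rpow_const
        (fun x => Or.inl (by show (1:ℝ) + |x| ≠ 0; positivity))).integrableOn_Icc).const_mul _
    have hint2' : IntegrableOn (fun x : ℝ => K2 * |a - x| ^ (-((1:ℝ)/2))) (Set.Icc (-c) c) :=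
      (sub_abs_rpow_intOn hm1 a (-c) c (by linarith)).const_mul _
    have hint2S : IntegrableOn (fun x : ℝ => K2 * |a - x| ^ (-((1:ℝ)/2))) S :=
      (sub_abs_rpow_intOn hm1 a (a - r) (a + r) (by linarith)).const_mul _
    have hint2 : Integrable (S.indicator fun x : ℝ => K2 * |a - x| ^ (-((1:ℝ)/2)))
        (volume.restrict (Set.Icc (-c) c)) :=
      hint2'.integrable.indicator measurableSet_Icc
    have hbound : ∀ x : ℝ, (1 + |x|) ^ p * |a - x| ^ (-((1:ℝ)/2)) ≤
        K1 * (1 + |x|) ^ p + S.indicator (fun x : ℝ => K2 * |a - x| ^ (-((1:ℝ)/2))) x := by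
      intro x
      rcases le_or_gt r |a - x| with h | h
      · have h1 : |a - x| ^ (-((1:ℝ)/2)) ≤ K1 :=
          Real.rpow_le_rpow_of_nonpos hr h (by norm_num)
        have h2 : (1 + |x|) ^ p * |a - x| ^ (-((1:ℝ)/2)) ≤ (1 + |x|) ^ p * K1 :=
          mul_le_mul_of_nonneg_left h1 (Real.rpow_nonneg (by positivity) _)
        have h3 : 0 ≤ S.indicator (fun x : ℝ => K2 * |a - x| ^ (-((1:ℝ)/2))) x :=
          Set.indicator_nonneg
            (fun y _ => mul_nonneg hK2 (Real.rpow_nonneg (abs_nonneg _) _)) x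
        calc (1 + |x|) ^ p * |a - x| ^ (-((1:ℝ)/2)) ≤ (1 + |x|) ^ p * K1 := h2
          _ = K1 * (1 + |x|) ^ p := mul_comm _ _
          _ ≤ _ := le_add_of_nonneg_right h3
      · have habs := abs_lt.mp h
        have hxS : x ∈ S := by
          rw [hSdef]
          exact Set.mem_Icc.mpr ⟨by linarith [habs.1, habs.2], by linarith [habs.1, habs.2]⟩
        have h1 : r ≤ 1 + |x| := by
          have h2 := abs_sub_abs_le_abs_sub a x
          have hr2 : r = A / 2 := hrdef
          have hA2 : A = 1 + |a| := hAdef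
          linarith
        have h2 : (1 + |x|) ^ p ≤ K2 :=
          Real.rpow_le_rpow_of_nonpos hr h1 hp0.le
        rw [Set.indicator_of_mem hxS]
        have h3 : (1 + |x|) ^ p * |a - x| ^ (-((1:ℝ)/2)) ≤ K2 * |a - x| ^ (-((1:ℝ)/2)) :=
          mul_le_mul_of_nonneg_right h2 (Real.rpow_nonneg (abs_nonneg _) _)
        have h4 : 0 ≤ K1 * (1 + |x|) ^ p :=
          mul_nonneg hK1 (Real.rpow_nonneg (by positivity) _)
        linarith
    have hind : ∫ x in Set.Icc (-c) c,
        S.indicator (fun x : ℝ => K2 * |a - x| ^ (-((1:ℝ)/2))) x ≤ K2 * (4 * r ^ ((1:ℝ)/2)) := by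
      rw [MeasureTheory.setIntegral_indicator measurableSet_Icc]
      have step : (∫ x in Set.Icc (-c) c ∩ S, K2 * |a - x| ^ (-((1:ℝ)/2)))
          ≤ ∫ x in S, K2 * |a - x| ^ (-((1:ℝ)/2)) :=
        setIntegral_mono_set hint2S
          (Filter.Eventually.of_forall fun x =>
            mul_nonneg hK2 (Real.rpow_nonneg (abs_nonneg _) _))
          (HasSubset.Subset.eventuallyLE Set.inter_subset_right)
      refine step.trans ?_
      rw [hSdef, MeasureTheory.integral_const_mul,
        sub_abs_rpow_integral hm1 hm0 hr.le a]
      have he : 2 * r ^ (-((1:ℝ)/2) + 1) / (-((1:ℝ)/2) + 1) = 4 * r ^ ((1:ℝ)/2) := by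
        norm_num
        ring
      rw [he]
    have hT1 : K1 * (2 / q * (1 + c) ^ q) ≤ 4 / q * (1 + c) ^ q / A ^ ((1:ℝ)/2) := by
      calc K1 * (2 / q * (1 + c) ^ q) ≤ (2 / A ^ ((1:ℝ)/2)) * (2 / q * (1 + c) ^ q) :=
          mul_le_mul_of_nonneg_right hfact1
            (mul_nonneg (div_nonneg (by norm_num) hq.le) hcq.le)
        _ = 4 / q * (1 + c) ^ q / A ^ ((1:ℝ)/2) := by
            field_simp
            ring
    have hrq : r ^ q ≤ (1 + c) ^ q := by
      apply Real.rpow_le_rpow hr.le _ hq.le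
      rw [hrdef, hAdef]
      linarith
    have hT2 : K2 * (4 * r ^ ((1:ℝ)/2)) ≤ 8 * (1 + c) ^ q / A ^ ((1:ℝ)/2) := by
      have he : r ^ p * r ^ ((1:ℝ)/2) = r ^ q * r ^ (-((1:ℝ)/2)) := by
        rw [← Real.rpow_add hr, ← Real.rpow_add hr]
        congr 1
        rw [hqdef, hpdef]; ring
      calc K2 * (4 * r ^ ((1:ℝ)/2)) = 4 * (r ^ p * r ^ ((1:ℝ)/2)) := by rw [hK2def]; ring
        _ = 4 * (r ^ q * r ^ (-((1:ℝ)/2))) := by rw [he]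
        _ ≤ 4 * ((1 + c) ^ q * (2 / A ^ ((1:ℝ)/2))) := by
            apply mul_le_mul_of_nonneg_left _ (by norm_num)
            exact mul_le_mul hrq hfact1 (Real.rpow_nonneg hr.le _) hcq.le
        _ = 8 * (1 + c) ^ q / A ^ ((1:ℝ)/2) := by ring
    calc (∫ x in Set.Icc (-c) c, (1 + |x|) ^ p * |a - x| ^ (-((1:ℝ)/2)))
        ≤ ∫ x in Set.Icc (-c) c, (K1 * (1 + |x|) ^ p +
            S.indicator (fun x : ℝ => K2 * |a - x| ^ (-((1:ℝ)/2))) x) :=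
          integral_mono_of_nonneg hfnn (hint1.integrable.add hint2)
            (Filter.Eventually.of_forall hbound)
      _ = K1 * (∫ x in Set.Icc (-c) c, (1 + |x|) ^ p) +
          ∫ x in Set.Icc (-c) c,
            S.indicator (fun x : ℝ => K2 * |a - x| ^ (-((1:ℝ)/2))) x := by
          rw [integral_add hint1.integrable hint2, MeasureTheory.integral_const_mul]
      _ ≤ K1 * (2 / q * (1 + c) ^ q) + K2 * (4 * r ^ ((1:ℝ)/2)) :=
          add_le_add (mul_le_mul_of_nonneg_left hbase hK1) hind
      _ ≤ 4 / q * (1 + c) ^ q / A ^ ((1:ℝ)/2) + 8 * (1 + c) ^ q / A ^ ((1:ℝ)/2) :=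
          add_le_add hT1 hT2
      _ = (4 / q + 8) * (1 + c) ^ q / A ^ ((1:ℝ)/2) := by ring
  · -- far case
    push_neg at hca
    have hbd : ∀ x ∈ Set.Icc (-c) c, (1 + |x|) ^ p * |a - x| ^ (-((1:ℝ)/2)) ≤
        r ^ (-((1:ℝ)/2)) * (1 + |x|) ^ p := by
      intro x hx
      have hxc : |x| ≤ c := abs_le.mpr ⟨hx.1, hx.2⟩
      have h2 := abs_sub_abs_le_abs_sub a x
      have h3 : r ≤ |a - x| := by
        have hr2 : r = A / 2 := hrdef
        have hA2 : A = 1 + |a| := hAdef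
        linarith
      have h4 : |a - x| ^ (-((1:ℝ)/2)) ≤ r ^ (-((1:ℝ)/2)) :=
        Real.rpow_le_rpow_of_nonpos hr h3 (by norm_num)
      calc (1 + |x|) ^ p * |a - x| ^ (-((1:ℝ)/2)) ≤ (1 + |x|) ^ p * r ^ (-((1:ℝ)/2)) :=
          mul_le_mul_of_nonneg_left h4 (Real.rpow_nonneg (by positivity) _)
        _ = r ^ (-((1:ℝ)/2)) * (1 + |x|) ^ p := mul_comm _ _
    have hint1 : IntegrableOn (fun x : ℝ => r ^ (-((1:ℝ)/2)) * (1 + |x|) ^ p)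
        (Set.Icc (-c) c) :=
      (((continuous_const.add continuous_abs).rpow_const
        (fun x => Or.inl (by show (1:ℝ) + |x| ≠ 0; positivity))).integrableOn_Icc).const_mul _
    calc (∫ x in Set.Icc (-c) c, (1 + |x|) ^ p * |a - x| ^ (-((1:ℝ)/2)))
        ≤ ∫ x in Set.Icc (-c) c, r ^ (-((1:ℝ)/2)) * (1 + |x|) ^ p :=
          integral_mono_of_nonneg hfnn hint1.integrable
            ((ae_restrict_iff' measurableSet_Icc).2 (Filter.Eventually.of_forall hbd))
      _ = r ^ (-((1:ℝ)/2)) * ∫ x in Set.Icc (-c) c, (1 + |x|) ^ p :=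
          MeasureTheory.integral_const_mul _ _
      _ ≤ (2 / A ^ ((1:ℝ)/2)) * (2 / q * (1 + c) ^ q) :=
          mul_le_mul hfact1 hbase hbasenn (div_nonneg (by norm_num) hApos.le)
      _ = 4 / q * (1 + c) ^ q / A ^ ((1:ℝ)/2) := by
          field_simp
          ring
      _ ≤ (4 / q + 8) * (1 + c) ^ q / A ^ ((1:ℝ)/2) := by
          have h8 : 0 ≤ 8 * (1 + c) ^ q / A ^ ((1:ℝ)/2) :=
            div_nonneg (by linarith) hApos.le
          have heq : (4 / q + 8) * (1 + c) ^ q / A ^ ((1:ℝ)/2) =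
              4 / q * (1 + c) ^ q / A ^ ((1:ℝ)/2) + 8 * (1 + c) ^ q / A ^ ((1:ℝ)/2) := by
            ring
          linarith
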